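/- Let V : ℝ → ℝ be a concave function with derivative tending to h > 0 as t → +∞, and let 𝔪 be the measure e^{V(t)} dt on ℝ. Then the volume entropy of (ℝ, |·|, 𝔪) equals h, i.e. lim_{r→∞} (1/r) · log(𝔪(B_r(x₀))) = h for any x₀ ∈ ℝ. -/

import Mathlib

open MeasureTheory Filter Metric Set

/-- Minkowski content of a set with respect to a measure. -/
noncomputable def minkowskiContent {X : Type*} [PseudoMetricSpace X] [MeasurableSpace X]
    (μ : Measure X) (Ω : Set X) : ℝ :=
  liminf (fun ε : ℝ => ((μ (thickening ε Ω)).toReal - (μ Ω).toReal) / ε) (nhdsWithin 0 (Ioi 0))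

section Aux

variable {V V' : ℝ → ℝ} {h : ℝ}

/-- Tangent line of a concave function lies above the graph. -/
lemma aux_tangent (hconc : ConcaveOn ℝ Set.univ V)
    (hderiv : ∀ t, HasDerivAt V (V' t) t) (s t : ℝ) :
    V t ≤ V s + V' s * (t - s) := by
  rcases lt_trichotomy t s with hlt | rfl | hlt
  · have key := hconc.le_slope_of_hasDerivAt (mem_univ t) (mem_univ s) hlt (hderiv s)
    rw [slope_def_field, le_div_iff₀ (by linarith)] at key
    nlinarith
  · simp
  · have key := hconc.slope_le_of_hasDerivAt (mem_univ s) (mem_univ t) hlt (hderiv s)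
    rw [slope_def_field, div_le_iff₀ (by linarith)] at key
    nlinarith

lemma aux_ge (hconc : ConcaveOn ℝ Set.univ V)
    (hderiv : ∀ t, HasDerivAt V (V' t) t) (hlim : Tendsto V' atTop (nhds h))
    (u : ℝ) : h ≤ V' u := by
  refine le_of_tendsto hlim ?_
  filter_upwards [eventually_ge_atTop u] with w hw
  rcases eq_or_lt_of_le hw with rfl | hlt
  · exact le_rfl
  · calc V' w ≤ slope V u w :=
          hconc.le_slope_of_hasDerivAt (mem_univ u) (mem_univ w) hlt (hderiv w)
      _ ≤ V' u := hconc.slope_le_of_hasDerivAt (mem_univ u) (mem_univ w) hlt (hderiv u)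

lemma aux_lin (hconc : ConcaveOn ℝ Set.univ V)
    (hderiv : ∀ t, HasDerivAt V (V' t) t) (hlim : Tendsto V' atTop (nhds h))
    {s t : ℝ} (hst : s ≤ t) : V s + h * (t - s) ≤ V t := by
  have hge : ∀ u, h ≤ V' u := aux_ge hconc hderiv hlim
  rcases eq_or_lt_of_le hst with rfl | hlt
  · simp
  · have key := hconc.le_slope_of_hasDerivAt (mem_univ s) (mem_univ t) hlt (hderiv t)
    rw [slope_def_field, le_div_iff₀ (by linarith)] at key
    nlinarith [hge t]

lemma aux_tendsto (hconc : ConcaveOn ℝ Set.univ V)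
    (hderiv : ∀ t, HasDerivAt V (V' t) t) (hpos : 0 < h)
    (hlim : Tendsto V' atTop (nhds h)) (x₀ : ℝ) :
    Tendsto (fun r : ℝ => V (x₀ + r) / r) atTop (nhds h) := by
  rw [tendsto_order]
  constructor
  · intro a ha
    have h1 : Tendsto (fun r : ℝ => V x₀ / r + h) atTop (nhds h) := by
      simpa using (tendsto_const_nhds.div_atTop tendsto_id).add (tendsto_const_nhds (x := h))
    filter_upwards [h1.eventually_const_lt ha, eventually_ge_atTop (1 : ℝ)] with r h2 h3
    have hr : (0:ℝ) < r := lt_of_lt_of_le one_pos h3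
    have hlin := aux_lin hconc hderiv hlim (s := x₀) (t := x₀ + r) (by linarith)
    have heq : V x₀ / r + h = (V x₀ + h * r) / r := by field_simp
    calc a < V x₀ / r + h := h2
      _ = (V x₀ + h * r) / r := heq
      _ ≤ V (x₀ + r) / r := by
          apply div_le_div_of_nonneg_right _ hr.le
          linarith
  · intro b hb
    have hm : h < (h + b) / 2 := by linarith
    obtain ⟨s, hs⟩ := (hlim.eventually_lt_const hm).exists
    have hsb : V' s < b := by linarith [hs]
    have h2 : Tendsto (fun r : ℝ => (V s + V' s * (x₀ - s)) / r + V' s) atTop (nhds (V' s)) := by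
      simpa using (tendsto_const_nhds.div_atTop tendsto_id).add (tendsto_const_nhds (x := V' s))
    filter_upwards [h2.eventually_lt_const hsb, eventually_ge_atTop (max 1 (s - x₀))] with r h3 h4
    have hr1 : (1:ℝ) ≤ r := le_trans (le_max_left _ _) h4
    have hr : (0:ℝ) < r := lt_of_lt_of_le one_pos hr1
    have hxs : s ≤ x₀ + r := by
      have := le_trans (le_max_right 1 (s - x₀)) h4
      linarith
    have htan := aux_tangent hconc hderiv s (x₀ + r)
    have heq : (V s + V' s * (x₀ - s)) / r + V' s = (V s + V' s * (x₀ + r - s)) / r := by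
      field_simp; ring
    calc V (x₀ + r) / r ≤ (V s + V' s * (x₀ + r - s)) / r := by
          apply div_le_div_of_nonneg_right _ hr.le
          linarith
      _ = (V s + V' s * (x₀ - s)) / r + V' s := heq.symm
      _ < b := h3

end Aux

/-- for `V` concave with `V' → h > 0` at `+∞`, the volume entropy of
`(ℝ, |·|, e^{V(t)} dt)` equals `h` at every basepoint. -/
theorem volume_entropy_of_concave_density
    (V V' : ℝ → ℝ) (hconc : ConcaveOn ℝ Set.univ V)
    (hderiv : ∀ t, HasDerivAt V (V' t) t)
    (h : ℝ) (hpos : 0 < h) (hlim : Tendsto V' atTop (nhds h))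
    (μ : Measure ℝ)
    (hμ : μ = volume.withDensity (fun t => ENNReal.ofReal (Real.exp (V t)))) :
    ∀ x₀ : ℝ,
      Tendsto (fun r : ℝ => Real.log ((μ (Metric.ball x₀ r)).toReal) / r)
        atTop (nhds h) := by
  intro x₀
  have hVcont : Continuous V := continuous_iff_continuousAt.2 fun t => (hderiv t).continuousAt
  have hf : Continuous fun t => Real.exp (V t) := Real.continuous_exp.comp hVcont
  have hfnn : ∀ t, 0 ≤ Real.exp (V t) := fun t => (Real.exp_pos _).le
  have hint : ∀ a b : ℝ, IntegrableOn (fun t => Real.exp (V t)) (Ioo a b) := fun a b =>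
    (hf.integrableOn_Icc).mono_set Ioo_subset_Icc_self
  have key : ∀ r : ℝ, (μ (Metric.ball x₀ r)).toReal
      = ∫ t in Ioo (x₀ - r) (x₀ + r), Real.exp (V t) := by
    intro r
    rw [hμ, Real.ball_eq_Ioo, withDensity_apply _ measurableSet_Ioo,
      ← ofReal_integral_eq_lintegral_ofReal (hint _ _) (ae_of_all _ fun t => hfnn t),
      ENNReal.toReal_ofReal (setIntegral_nonneg measurableSet_Ioo fun t _ => hfnn t)]
  have hmono : Monotone V := by
    intro a b hab
    have := aux_lin hconc hderiv hlim hab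
    nlinarith
  have hge := aux_ge hconc hderiv hlim
  have hbound : ∀ᶠ r : ℝ in atTop,
      Real.exp (V (x₀ + r - 1)) ≤ (μ (Metric.ball x₀ r)).toReal ∧
      (μ (Metric.ball x₀ r)).toReal ≤ Real.exp (V (x₀ + r)) / h := by
    filter_upwards [eventually_ge_atTop (1 : ℝ)] with r hr
    rw [key r]
    constructor
    · have hsub : Ioo (x₀ + r - 1) (x₀ + r) ⊆ Ioo (x₀ - r) (x₀ + r) :=
        Ioo_subset_Ioo (by linarith) le_rfl
      have step1 : ∫ t in Ioo (x₀ + r - 1) (x₀ + r), Real.exp (V t)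
          ≤ ∫ t in Ioo (x₀ - r) (x₀ + r), Real.exp (V t) :=
        setIntegral_mono_set (hint _ _) (ae_of_all _ fun t => hfnn t)
          (HasSubset.Subset.eventuallyLE hsub)
      have cst : ∫ _t in Ioo (x₀ + r - 1) (x₀ + r), Real.exp (V (x₀ + r - 1))
          = Real.exp (V (x₀ + r - 1)) := by
        rw [setIntegral_const, measureReal_def, Real.volume_Ioo, show x₀ + r - (x₀ + r - 1) = 1 by ring]
        simp
      have step2 : Real.exp (V (x₀ + r - 1))
          ≤ ∫ t in Ioo (x₀ + r - 1) (x₀ + r), Real.exp (V t) := by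
        rw [← cst]
        refine setIntegral_mono_on
          (integrableOn_const (by rw [Real.volume_Ioo]; exact ENNReal.ofReal_ne_top))
          (hint _ _) measurableSet_Ioo fun t ht => Real.exp_le_exp.2 (hmono ht.1.le)
      linarith
    · set s := x₀ + r with hs
      set k := V' s with hk
      have hkh : h ≤ k := hge s
      have hkpos : 0 < k := lt_of_lt_of_le hpos hkh
      have hgc : Continuous fun t : ℝ => Real.exp (V s + k * (t - s)) := by continuity
      have hg : ∀ t : ℝ, HasDerivAt (fun t => Real.exp (V s + k * (t - s)) / k)
          (Real.exp (V s + k * (t - s))) t := by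
        intro t
        have h1 : HasDerivAt (fun t : ℝ => V s + k * (t - s)) k t := by
          simpa using (((hasDerivAt_id t).sub_const s).const_mul k).const_add (V s)
        have h2 := h1.exp
        have h3 := h2.div_const k
        have : Real.exp (V s + k * (t - s)) * k / k = Real.exp (V s + k * (t - s)) := by
          field_simp
        rwa [this] at h3
      have step1 : ∫ t in Ioo (x₀ - r) s, Real.exp (V t)
          ≤ ∫ t in Ioo (x₀ - r) s, Real.exp (V s + k * (t - s)) := by
        refine setIntegral_mono_on (hint _ _)
          ((hgc.integrableOn_Icc).mono_set Ioo_subset_Icc_self) measurableSet_Ioo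
          fun t _ => Real.exp_le_exp.2 (aux_tangent hconc hderiv s t)
      have hle : x₀ - r ≤ s := by rw [hs]; linarith
      have step2 : ∫ t in Ioo (x₀ - r) s, Real.exp (V s + k * (t - s))
          = Real.exp (V s + k * (s - s)) / k - Real.exp (V s + k * (x₀ - r - s)) / k := by
        rw [← integral_Ioc_eq_integral_Ioo, ← intervalIntegral.integral_of_le hle]
        exact intervalIntegral.integral_eq_sub_of_hasDerivAt (fun t _ => hg t)
          (hgc.intervalIntegrable _ _)
      have step3 : ∫ t in Ioo (x₀ - r) s, Real.exp (V s + k * (t - s))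
          ≤ Real.exp (V s) / k := by
        rw [step2, sub_self, mul_zero, add_zero]
        have := (Real.exp_pos (V s + k * (x₀ - r - s))).le
        have hk0 : 0 ≤ Real.exp (V s + k * (x₀ - r - s)) / k := div_nonneg this hkpos.le
        linarith
      have step4 : Real.exp (V s) / k ≤ Real.exp (V s) / h := by
        gcongr
      linarith
  have hlow : Tendsto (fun r : ℝ => V (x₀ + r - 1) / r) atTop (nhds h) := by
    have := aux_tendsto hconc hderiv hpos hlim (x₀ - 1)
    exact this.congr fun r => by ring_nf
  have hup : Tendsto (fun r : ℝ => (V (x₀ + r) - Real.log h) / r) atTop (nhds h) := by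
    have h1 := aux_tendsto hconc hderiv hpos hlim x₀
    have h2 : Tendsto (fun r : ℝ => Real.log h / r) atTop (nhds 0) :=
      tendsto_const_nhds.div_atTop tendsto_id
    simpa [sub_div] using h1.sub h2
  refine tendsto_of_tendsto_of_tendsto_of_le_of_le' hlow hup ?_ ?_
  · filter_upwards [hbound, eventually_ge_atTop (1 : ℝ)] with r hb hr
    have hlog : V (x₀ + r - 1) ≤ Real.log ((μ (Metric.ball x₀ r)).toReal) := by
      rw [← Real.log_exp (V (x₀ + r - 1))]
      exact Real.log_le_log (Real.exp_pos _) hb.1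
    exact div_le_div_of_nonneg_right hlog (by linarith)
  · filter_upwards [hbound, eventually_ge_atTop (1 : ℝ)] with r hb hr
    have hμpos : 0 < (μ (Metric.ball x₀ r)).toReal := lt_of_lt_of_le (Real.exp_pos _) hb.1
    have hlog : Real.log ((μ (Metric.ball x₀ r)).toReal) ≤ V (x₀ + r) - Real.log h := by
      have := Real.log_le_log hμpos hb.2
      rwa [Real.log_div (Real.exp_ne_zero _) hpos.ne', Real.log_exp] at this
    exact div_le_div_of_nonneg_right hlog (by linarith)
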